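/- In the setting of the two-big-jumps example ($R$ Weibull(1/2), $V$ uniform on $\{(1,\varepsilon),(\varepsilon,1)\}$, Rademacher signs, $X_i$ i.i.d. copies of $X=(RV_1S_1,RV_2S_2)$), for every $\varepsilon\in(0,1)$ one has $\liminf_{N\to\infty} N^{-1/2}\log\mathbb{P}\big(N^{-1}\sum_{i=1}^N X_i \ge (1,1)\big) \ge -2$. In particular, when $\varepsilon<1/4$ this lower bound $-2$ is strictly larger than $-\mathcal{J}(1,1)=-\varepsilon^{-1/2}$, so the single-jump rate $\mathcal{J}$ is not the correct rate for this event. -/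

import Mathlib

open MeasureTheory Filter Real Set

/-- The law of the sign `S`: Rademacher, `P(S = ±1) = 1/2`. -/
noncomputable def rademacherLaw : Measure ℝ :=
  ((1:ENNReal)/2) • Measure.dirac (1:ℝ) + ((1:ENNReal)/2) • Measure.dirac (-1:ℝ)

/-- The law of the direction `V`: uniform on `{(1,ε),(ε,1)}`. -/
noncomputable def directionLaw (ε : ℝ) : Measure (ℝ × ℝ) :=
  ((1:ENNReal)/2) • Measure.dirac ((1:ℝ), ε) + ((1:ENNReal)/2) • Measure.dirac (ε, (1:ℝ))

/-- The law of one summand `X = (R V₁ S₁, R V₂ S₂)`. -/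
noncomputable def twoJumpLaw (ε : ℝ) (νR : Measure ℝ) [IsProbabilityMeasure νR] :
    Measure (ℝ × ℝ) :=
  Measure.map
    (fun p : ℝ × ((ℝ × ℝ) × (ℝ × ℝ)) =>
      (p.1 * p.2.1.1 * p.2.2.1, p.1 * p.2.1.2 * p.2.2.2))
    (νR.prod ((directionLaw ε).prod (rademacherLaw.prod rademacherLaw)))

instance : IsProbabilityMeasure rademacherLaw := by
  constructor
  simp [rademacherLaw]
  rw [ENNReal.inv_two_add_inv_two]

instance (ε : ℝ) : IsProbabilityMeasure (directionLaw ε) := by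
  constructor
  simp [directionLaw]
  rw [ENNReal.inv_two_add_inv_two]

lemma rademacher_map_neg : rademacherLaw.map (fun x : ℝ => -x) = rademacherLaw := by
  rw [rademacherLaw, Measure.map_add _ _ measurable_neg, Measure.map_smul, Measure.map_smul,
    Measure.map_dirac' measurable_neg, Measure.map_dirac' measurable_neg]
  simp [add_comm]

lemma measurable_jumpFun : Measurable (fun p : ℝ × ((ℝ × ℝ) × (ℝ × ℝ)) =>
    (p.1 * p.2.1.1 * p.2.2.1, p.1 * p.2.1.2 * p.2.2.2)) := by fun_prop

lemma map_prod_right {α β γ: Type*} [MeasurableSpace α] [MeasurableSpace β] [MeasurableSpace γ]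
    (μ : Measure α) (ν : Measure β) [SFinite μ] [SFinite ν] {g : β → γ} (hg : Measurable g) :
    (μ.prod ν).map (Prod.map id g) = μ.prod (ν.map g) := by
  rw [← Measure.map_prod_map _ _ measurable_id hg, Measure.map_id]

lemma signs_map_flip1 :
    (rademacherLaw.prod rademacherLaw).map (fun s : ℝ × ℝ => (-s.1, s.2))
      = rademacherLaw.prod rademacherLaw := by
  have h : (fun s : ℝ × ℝ => (-s.1, s.2)) = Prod.map (fun x : ℝ => -x) (id : ℝ → ℝ) := rfl
  rw [h, ← Measure.map_prod_map _ _ measurable_neg measurable_id, rademacher_map_neg,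
    Measure.map_id]

lemma signs_map_flip2 :
    (rademacherLaw.prod rademacherLaw).map (fun s : ℝ × ℝ => (s.1, -s.2))
      = rademacherLaw.prod rademacherLaw := by
  have h : (fun s : ℝ × ℝ => (s.1, -s.2)) = Prod.map (id : ℝ → ℝ) (fun x : ℝ => -x) := rfl
  rw [h, ← Measure.map_prod_map _ _ measurable_id measurable_neg, rademacher_map_neg,
    Measure.map_id]

lemma twoJumpLaw_flip (ε : ℝ) (νR : Measure ℝ) [IsProbabilityMeasure νR]
    (σ : (ℝ × ℝ) → (ℝ × ℝ)) (hσ : Measurable σ)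
    (hσS : (rademacherLaw.prod rademacherLaw).map σ = rademacherLaw.prod rademacherLaw)
    (g : (ℝ × ℝ) → (ℝ × ℝ)) (hg : Measurable g)
    (hcomm : ∀ r : ℝ, ∀ v s : ℝ × ℝ,
      g (r * v.1 * s.1, r * v.2 * s.2) = (r * v.1 * (σ s).1, r * v.2 * (σ s).2)) :
    (twoJumpLaw ε νR).map g = twoJumpLaw ε νR := by
  rw [twoJumpLaw, Measure.map_map hg measurable_jumpFun]
  have hcomp : (g ∘ (fun p : ℝ × ((ℝ × ℝ) × (ℝ × ℝ)) =>
      (p.1 * p.2.1.1 * p.2.2.1, p.1 * p.2.1.2 * p.2.2.2)))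
      = (fun p : ℝ × ((ℝ × ℝ) × (ℝ × ℝ)) =>
        (p.1 * p.2.1.1 * p.2.2.1, p.1 * p.2.1.2 * p.2.2.2)) ∘
        (Prod.map id (Prod.map id σ)) := by
    funext p
    simpa [Prod.map] using hcomm p.1 p.2.1 p.2.2
  rw [hcomp, ← Measure.map_map measurable_jumpFun (by fun_prop)]
  rw [map_prod_right _ _ (by fun_prop), map_prod_right _ _ hσ, hσS]

open ProbabilityTheory in
lemma indepFun_sum_right {Ω : Type*} [MeasurableSpace Ω] {μ : Measure Ω} [IsProbabilityMeasure μ]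
    {X : ℕ → Ω → ℝ × ℝ} (hindep : iIndepFun X μ)
    (hmeas : ∀ i, Measurable (X i)) (s : Finset ℕ) {j : ℕ} (hj : j ∉ s) :
    IndepFun (X j) (fun ω => ∑ i ∈ s, X i ω) μ := by
  classical
  have h := hindep.indepFun_finset {j} s (Finset.disjoint_singleton_left.mpr hj) hmeas
  have h2 := h.comp (φ := fun v : (∀ i : ({j} : Finset ℕ), ℝ × ℝ) => v ⟨j, Finset.mem_singleton_self j⟩)
      (ψ := fun v : (∀ i : s, ℝ × ℝ) => ∑ i, v i)
      (_mγ := inferInstance) (measurable_pi_apply _) (Finset.measurable_sum _ (fun i _ => measurable_pi_apply i))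
  have e1 : ((fun v : (∀ i : ({j} : Finset ℕ), ℝ × ℝ) => v ⟨j, Finset.mem_singleton_self j⟩) ∘
      (fun a (i : ({j} : Finset ℕ)) => X i a)) = X j := rfl
  have e2 : ((fun v : (∀ i : s, ℝ × ℝ) => ∑ i, v i) ∘ (fun a (i : s) => X i a))
      = fun ω => ∑ i ∈ s, X i ω := by
    funext ω
    exact Finset.sum_coe_sort s (fun i => X i ω)
  rwa [e1, e2] at h2

open ProbabilityTheory in
lemma indepFun_pair_sum {Ω : Type*} [MeasurableSpace Ω] {μ : Measure Ω} [IsProbabilityMeasure μ]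
    {X : ℕ → Ω → ℝ × ℝ} (hindep : iIndepFun X μ)
    (hmeas : ∀ i, Measurable (X i)) (N : ℕ) :
    IndepFun (fun ω => (X 0 ω, X 1 ω)) (fun ω => ∑ i ∈ Finset.Ico 2 N, X i ω) μ := by
  classical
  have hd : Disjoint ({0, 1} : Finset ℕ) (Finset.Ico 2 N) := by
    simp [Finset.disjoint_left, Finset.mem_Ico]
  have h := hindep.indepFun_finset {0, 1} (Finset.Ico 2 N) hd hmeas
  have h0 : (0 : ℕ) ∈ ({0, 1} : Finset ℕ) := by simp
  have h1 : (1 : ℕ) ∈ ({0, 1} : Finset ℕ) := by simp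
  have h2 := h.comp (φ := fun v : (∀ i : ({0, 1} : Finset ℕ), ℝ × ℝ) => (v ⟨0, h0⟩, v ⟨1, h1⟩))
      (ψ := fun v : (∀ i : (Finset.Ico 2 N), ℝ × ℝ) => ∑ i, v i)
      (by fun_prop)
      (Finset.measurable_sum _ (fun i _ => measurable_pi_apply i))
  have e2 : ((fun v : (∀ i : (Finset.Ico 2 N), ℝ × ℝ) => ∑ i, v i) ∘
      (fun a (i : (Finset.Ico 2 N)) => X i a)) = fun ω => ∑ i ∈ Finset.Ico 2 N, X i ω := by
    funext ω
    exact Finset.sum_coe_sort _ (fun i => X i ω)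
  rwa [e2] at h2

open ProbabilityTheory in
lemma map_sum_eq {Ω : Type*} [MeasurableSpace Ω] {μ : Measure Ω} [IsProbabilityMeasure μ]
    {X Y : ℕ → Ω → ℝ × ℝ}
    (hX : iIndepFun X μ) (hY : iIndepFun Y μ)
    (hmX : ∀ i, Measurable (X i)) (hmY : ∀ i, Measurable (Y i))
    (h : ∀ i, μ.map (X i) = μ.map (Y i)) (s : Finset ℕ) :
    μ.map (fun ω => ∑ i ∈ s, X i ω) = μ.map (fun ω => ∑ i ∈ s, Y i ω) := by
  classical
  induction s using Finset.cons_induction with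
  | empty => simp
  | cons j s hj ih =>
    have hmSX : Measurable (fun ω => ∑ i ∈ s, X i ω) :=
      Finset.measurable_sum _ (fun i _ => hmX i)
    have hmSY : Measurable (fun ω => ∑ i ∈ s, Y i ω) :=
      Finset.measurable_sum _ (fun i _ => hmY i)
    have hadd : Measurable (fun p : (ℝ × ℝ) × (ℝ × ℝ) => p.1 + p.2) := by fun_prop
    have hiX : IndepFun (X j) (fun ω => ∑ i ∈ s, X i ω) μ := indepFun_sum_right hX hmX s hj
    have hiY : IndepFun (Y j) (fun ω => ∑ i ∈ s, Y i ω) μ := indepFun_sum_right hY hmY s hj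
    have hpX := (indepFun_iff_map_prod_eq_prod_map_map (hmX j).aemeasurable hmSX.aemeasurable).mp hiX
    have hpY := (indepFun_iff_map_prod_eq_prod_map_map (hmY j).aemeasurable hmSY.aemeasurable).mp hiY
    have eX : (fun ω => ∑ i ∈ Finset.cons j s hj, X i ω)
        = (fun p : (ℝ × ℝ) × (ℝ × ℝ) => p.1 + p.2) ∘ (fun ω => (X j ω, ∑ i ∈ s, X i ω)) := by
      funext ω; rw [Finset.sum_cons]; rfl
    have eY : (fun ω => ∑ i ∈ Finset.cons j s hj, Y i ω)
        = (fun p : (ℝ × ℝ) × (ℝ × ℝ) => p.1 + p.2) ∘ (fun ω => (Y j ω, ∑ i ∈ s, Y i ω)) := by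
      funext ω; rw [Finset.sum_cons]; rfl
    rw [eX, eY, ← Measure.map_map hadd ((hmX j).prodMk hmSX),
      ← Measure.map_map hadd ((hmY j).prodMk hmSY), hpX, hpY, h j, ih]

open ProbabilityTheory in
lemma quadrant_bound {Ω : Type*} [MeasurableSpace Ω] {μ : Measure Ω} [IsProbabilityMeasure μ]
    {X : ℕ → Ω → ℝ × ℝ} (hindep : iIndepFun X μ)
    (hmeas : ∀ i, Measurable (X i)) {pL : Measure (ℝ × ℝ)}
    (hident : ∀ i, μ.map (X i) = pL)
    (hf1 : pL.map (fun p : ℝ × ℝ => (-p.1, p.2)) = pL)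
    (hf2 : pL.map (fun p : ℝ × ℝ => (p.1, -p.2)) = pL) (s : Finset ℕ) :
    (1 : ENNReal) / 4 ≤ μ {ω | 0 ≤ (∑ i ∈ s, X i ω).1 ∧ 0 ≤ (∑ i ∈ s, X i ω).2} := by
  classical
  set g₁ : ℝ × ℝ → ℝ × ℝ := fun p => (-p.1, p.2) with hg₁def
  set g₂ : ℝ × ℝ → ℝ × ℝ := fun p => (p.1, -p.2) with hg₂def
  have hg₁ : Measurable g₁ := by fun_prop
  have hg₂ : Measurable g₂ := by fun_prop
  have hT : Measurable (fun ω => ∑ i ∈ s, X i ω) :=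
    Finset.measurable_sum _ (fun i _ => hmeas i)
  set T : Ω → ℝ × ℝ := fun ω => ∑ i ∈ s, X i ω with hTdef
  set lam : Measure (ℝ × ℝ) := μ.map T with hlamdef
  haveI : IsProbabilityMeasure lam := Measure.isProbabilityMeasure_map hT.aemeasurable
  -- invariance of lam under g₁ and g₂
  have key : ∀ g : ℝ × ℝ → ℝ × ℝ, Measurable g → pL.map g = pL →
      (∀ (t : Finset ℕ) (f : ℕ → ℝ × ℝ), g (∑ i ∈ t, f i) = ∑ i ∈ t, g (f i)) →
      lam.map g = lam := by
    intro g hg hgpL hgadd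
    have hY : iIndepFun (fun i => g ∘ X i) μ :=
      hindep.comp (fun _ => g) (fun _ => hg)
    have hmY : ∀ i, Measurable (g ∘ X i) := fun i => hg.comp (hmeas i)
    have hid : ∀ i, μ.map (X i) = μ.map (g ∘ X i) := by
      intro i
      rw [← Measure.map_map hg (hmeas i), hident i, hgpL]
    have hsum := map_sum_eq hindep hY hmeas hmY hid s
    have e : (fun ω => ∑ i ∈ s, (g ∘ X i) ω) = g ∘ T := by
      funext ω
      simp only [Function.comp_apply, hTdef]
      rw [hgadd s (fun i => X i ω)]
    rw [hlamdef, Measure.map_map hg hT, ← e, ← hsum]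
  have hadd₁ : ∀ (t : Finset ℕ) (f : ℕ → ℝ × ℝ), g₁ (∑ i ∈ t, f i) = ∑ i ∈ t, g₁ (f i) := by
    intro t f
    simp [hg₁def, Prod.ext_iff, Prod.fst_sum, Prod.snd_sum]
  have hadd₂ : ∀ (t : Finset ℕ) (f : ℕ → ℝ × ℝ), g₂ (∑ i ∈ t, f i) = ∑ i ∈ t, g₂ (f i) := by
    intro t f
    simp [hg₂def, Prod.ext_iff, Prod.fst_sum, Prod.snd_sum]
  have hl1 : lam.map g₁ = lam := key g₁ hg₁ hf1 hadd₁
  have hl2 : lam.map g₂ = lam := key g₂ hg₂ hf2 hadd₂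
  -- the four quadrants
  set C1 : Set (ℝ × ℝ) := {p | 0 ≤ p.1 ∧ 0 ≤ p.2} with hC1def
  set C2 : Set (ℝ × ℝ) := {p | p.1 ≤ 0 ∧ 0 ≤ p.2} with hC2def
  set C3 : Set (ℝ × ℝ) := {p | 0 ≤ p.1 ∧ p.2 ≤ 0} with hC3def
  set C4 : Set (ℝ × ℝ) := {p | p.1 ≤ 0 ∧ p.2 ≤ 0} with hC4def
  have hC1 : MeasurableSet C1 :=
    (measurableSet_le measurable_const measurable_fst).inter
      (measurableSet_le measurable_const measurable_snd)
  have hC2 : MeasurableSet C2 :=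
    (measurableSet_le measurable_fst measurable_const).inter
      (measurableSet_le measurable_const measurable_snd)
  have hC3 : MeasurableSet C3 :=
    (measurableSet_le measurable_const measurable_fst).inter
      (measurableSet_le measurable_snd measurable_const)
  have hC4 : MeasurableSet C4 :=
    (measurableSet_le measurable_fst measurable_const).inter
      (measurableSet_le measurable_snd measurable_const)
  have e2 : lam C2 = lam C1 := by
    conv_lhs => rw [← hl1]
    rw [Measure.map_apply hg₁ hC2]
    congr 1
    ext p
    simp [hg₁def, hC1def, hC2def, neg_nonpos]
  have e3 : lam C3 = lam C1 := by
    conv_lhs => rw [← hl2]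
    rw [Measure.map_apply hg₂ hC3]
    congr 1
    ext p
    simp [hg₂def, hC1def, hC3def, neg_nonpos]
  have e4 : lam C4 = lam C2 := by
    conv_lhs => rw [← hl2]
    rw [Measure.map_apply hg₂ hC4]
    congr 1
    ext p
    simp [hg₂def, hC2def, hC4def, neg_nonpos]
  have hcover : (univ : Set (ℝ × ℝ)) ⊆ (C1 ∪ C2) ∪ (C3 ∪ C4) := by
    intro p _
    rcases le_total 0 p.1 with h1 | h1 <;> rcases le_total 0 p.2 with h2 | h2
    · exact Or.inl (Or.inl ⟨h1, h2⟩)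
    · exact Or.inr (Or.inl ⟨h1, h2⟩)
    · exact Or.inl (Or.inr ⟨h1, h2⟩)
    · exact Or.inr (Or.inr ⟨h1, h2⟩)
  have hone : (1 : ENNReal) ≤ lam C1 * 4 := by
    have h1 : lam univ = 1 := measure_univ
    have : (1 : ENNReal) ≤ lam C1 + lam C2 + (lam C3 + lam C4) := by
      calc (1 : ENNReal) = lam univ := h1.symm
        _ ≤ lam ((C1 ∪ C2) ∪ (C3 ∪ C4)) := measure_mono hcover
        _ ≤ lam (C1 ∪ C2) + lam (C3 ∪ C4) := measure_union_le _ _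
        _ ≤ lam C1 + lam C2 + (lam C3 + lam C4) :=
            add_le_add (measure_union_le _ _) (measure_union_le _ _)
    calc (1 : ENNReal) ≤ lam C1 + lam C2 + (lam C3 + lam C4) := this
      _ = lam C1 * 4 := by rw [e2, e3, e4, e2]; ring
  have hq : (1 : ENNReal) / 4 ≤ lam C1 := ENNReal.div_le_of_le_mul hone
  have : lam C1 = μ {ω | 0 ≤ (∑ i ∈ s, X i ω).1 ∧ 0 ≤ (∑ i ∈ s, X i ω).2} := by
    rw [hlamdef, Measure.map_apply hT hC1]
    rfl
  rwa [this] at hq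

lemma rad_one : rademacherLaw {(1 : ℝ)} = 1 / 2 := by
  rw [rademacherLaw]
  rw [Measure.add_apply, Measure.smul_apply, Measure.smul_apply,
    Measure.dirac_apply' _ (measurableSet_singleton _),
    Measure.dirac_apply' _ (measurableSet_singleton _)]
  norm_num

lemma dir_one (ε : ℝ) (hε : ε ≠ 1) : directionLaw ε {((1 : ℝ), ε)} = 1 / 2 := by
  rw [directionLaw]
  rw [Measure.add_apply, Measure.smul_apply, Measure.smul_apply,
    Measure.dirac_apply' _ (measurableSet_singleton _),
    Measure.dirac_apply' _ (measurableSet_singleton _)]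
  rw [Set.indicator_apply, Set.indicator_apply]
  simp [Prod.ext_iff, hε, Ne.symm hε]

lemma dir_two (ε : ℝ) (hε : ε ≠ 1) : directionLaw ε {(ε, (1 : ℝ))} = 1 / 2 := by
  rw [directionLaw]
  rw [Measure.add_apply, Measure.smul_apply, Measure.smul_apply,
    Measure.dirac_apply' _ (measurableSet_singleton _),
    Measure.dirac_apply' _ (measurableSet_singleton _)]
  rw [Set.indicator_apply, Set.indicator_apply]
  simp [Prod.ext_iff, hε, Ne.symm hε]

lemma radpair : (rademacherLaw.prod rademacherLaw) {((1:ℝ), (1:ℝ))}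
    = rademacherLaw {(1:ℝ)} * rademacherLaw {(1:ℝ)} := by
  rw [← Set.singleton_prod_singleton, Measure.prod_prod]

lemma jump_bound1 (ε : ℝ) (hε : ε ∈ Set.Ioo (0:ℝ) 1) (νR : Measure ℝ) [IsProbabilityMeasure νR]
    (a : ℝ) (ha : 0 ≤ a) :
    νR (Set.Ici a) * (1 / 8 : ENNReal)
      ≤ twoJumpLaw ε νR {p : ℝ × ℝ | a ≤ p.1 ∧ 0 ≤ p.2} := by
  have hA : MeasurableSet {p : ℝ × ℝ | a ≤ p.1 ∧ 0 ≤ p.2} :=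
    (measurableSet_le measurable_const measurable_fst).inter
      (measurableSet_le measurable_const measurable_snd)
  rw [twoJumpLaw, Measure.map_apply measurable_jumpFun hA]
  have hsub : (Set.Ici a ×ˢ (({((1:ℝ), ε)} : Set (ℝ × ℝ)) ×ˢ ({((1:ℝ), (1:ℝ))} : Set (ℝ × ℝ))))
      ⊆ (fun p : ℝ × ((ℝ × ℝ) × (ℝ × ℝ)) =>
        (p.1 * p.2.1.1 * p.2.2.1, p.1 * p.2.1.2 * p.2.2.2)) ⁻¹'
        {p : ℝ × ℝ | a ≤ p.1 ∧ 0 ≤ p.2} := by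
    rintro ⟨r, v, sg⟩ ⟨hr, hv, hs⟩
    simp only [Set.mem_singleton_iff] at hv hs
    subst hv; subst hs
    simp only [Set.mem_preimage, Set.mem_setOf_eq]
    constructor
    · simpa using hr
    · have : (0:ℝ) ≤ r := le_trans ha hr
      simp only [mul_one]
      exact mul_nonneg this hε.1.le
  calc νR (Set.Ici a) * (1 / 8 : ENNReal)
      = νR (Set.Ici a) * (directionLaw ε {((1:ℝ), ε)} *
          (rademacherLaw {(1:ℝ)} * rademacherLaw {(1:ℝ)})) := by
        rw [dir_one ε hε.2.ne, rad_one, show ((1:ENNReal)/2 * ((1:ENNReal)/2 * ((1:ENNReal)/2))) = 1/8 by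
          rw [one_div, ← ENNReal.mul_inv (by norm_num) (by norm_num),
            ← ENNReal.mul_inv (by norm_num) (by norm_num)]
          norm_num]
    _ = (νR.prod ((directionLaw ε).prod (rademacherLaw.prod rademacherLaw)))
          (Set.Ici a ×ˢ (({((1:ℝ), ε)} : Set (ℝ × ℝ)) ×ˢ ({((1:ℝ), (1:ℝ))} : Set (ℝ × ℝ)))) := by
        rw [Measure.prod_prod, Measure.prod_prod, radpair]
    _ ≤ _ := measure_mono hsub

lemma jump_bound2 (ε : ℝ) (hε : ε ∈ Set.Ioo (0:ℝ) 1) (νR : Measure ℝ) [IsProbabilityMeasure νR]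
    (a : ℝ) (ha : 0 ≤ a) :
    νR (Set.Ici a) * (1 / 8 : ENNReal)
      ≤ twoJumpLaw ε νR {p : ℝ × ℝ | 0 ≤ p.1 ∧ a ≤ p.2} := by
  have hA : MeasurableSet {p : ℝ × ℝ | 0 ≤ p.1 ∧ a ≤ p.2} :=
    (measurableSet_le measurable_const measurable_fst).inter
      (measurableSet_le measurable_const measurable_snd)
  rw [twoJumpLaw, Measure.map_apply measurable_jumpFun hA]
  have hsub : (Set.Ici a ×ˢ (({(ε, (1:ℝ))} : Set (ℝ × ℝ)) ×ˢ ({((1:ℝ), (1:ℝ))} : Set (ℝ × ℝ))))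
      ⊆ (fun p : ℝ × ((ℝ × ℝ) × (ℝ × ℝ)) =>
        (p.1 * p.2.1.1 * p.2.2.1, p.1 * p.2.1.2 * p.2.2.2)) ⁻¹'
        {p : ℝ × ℝ | 0 ≤ p.1 ∧ a ≤ p.2} := by
    rintro ⟨r, v, sg⟩ ⟨hr, hv, hs⟩
    simp only [Set.mem_singleton_iff] at hv hs
    subst hv; subst hs
    simp only [Set.mem_preimage, Set.mem_setOf_eq]
    constructor
    · have : (0:ℝ) ≤ r := le_trans ha hr
      simp only [mul_one]
      exact mul_nonneg this hε.1.le
    · simpa using hr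
  calc νR (Set.Ici a) * (1 / 8 : ENNReal)
      = νR (Set.Ici a) * (directionLaw ε {(ε, (1:ℝ))} *
          (rademacherLaw {(1:ℝ)} * rademacherLaw {(1:ℝ)})) := by
        rw [dir_two ε hε.2.ne, rad_one, show ((1:ENNReal)/2 * ((1:ENNReal)/2 * ((1:ENNReal)/2))) = 1/8 by
          rw [one_div, ← ENNReal.mul_inv (by norm_num) (by norm_num),
            ← ENNReal.mul_inv (by norm_num) (by norm_num)]
          norm_num]
    _ = (νR.prod ((directionLaw ε).prod (rademacherLaw.prod rademacherLaw)))
          (Set.Ici a ×ˢ (({(ε, (1:ℝ))} : Set (ℝ × ℝ)) ×ˢ ({((1:ℝ), (1:ℝ))} : Set (ℝ × ℝ)))) := by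
        rw [Measure.prod_prod, Measure.prod_prod, radpair]
    _ ≤ _ := measure_mono hsub

/-- In the two-big-jumps example (`R` Weibull(1/2), `V` uniform on
`{(1,ε),(ε,1)}`, Rademacher signs), for i.i.d. copies `X_i` of `X`,
`liminf_N N^{-1/2} log P(N^{-1} ∑ X_i ≥ (1,1)) ≥ -2`; in particular, for `ε < 1/4`
this lower bound `-2` is strictly larger than `-J(1,1) = -ε^{-1/2}`, so the
single-jump rate is not the correct rate for this event. -/
theorem two_big_jumps_lower_bound
    {Ω : Type*} [MeasurableSpace Ω] (μ : Measure Ω) [IsProbabilityMeasure μ]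
    (ε : ℝ) (hε : ε ∈ Set.Ioo (0:ℝ) 1)
    (νR : Measure ℝ) [IsProbabilityMeasure νR]
    (hνR : ∀ t : ℝ, 0 ≤ t → νR (Set.Ici t) = ENNReal.ofReal (Real.exp (-(t ^ ((1:ℝ)/2)))))
    (X : ℕ → Ω → ℝ × ℝ) (hmeas : ∀ i, Measurable (X i))
    (hindep : ProbabilityTheory.iIndepFun X μ)
    (hident : ∀ i, Measure.map (X i) μ = twoJumpLaw ε νR) :
    (-2 : ℝ) ≤ Filter.liminf (fun N : ℕ =>
        Real.log (μ {ω | (N:ℝ) * 1 ≤ (∑ i ∈ Finset.range N, X i ω).1 ∧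
            (N:ℝ) * 1 ≤ (∑ i ∈ Finset.range N, X i ω).2}).toReal
          / (N:ℝ) ^ ((1:ℝ)/2)) atTop ∧
    (ε < 1/4 → -(ε ^ (-(1:ℝ)/2)) < (-2 : ℝ)) := by
  obtain ⟨hε0, hε1⟩ := hε
  constructor
  · -- main liminf bound
    have hflip1 : (twoJumpLaw ε νR).map (fun p : ℝ × ℝ => (-p.1, p.2)) = twoJumpLaw ε νR := by
      refine twoJumpLaw_flip ε νR (fun s => (-s.1, s.2)) (by fun_prop) signs_map_flip1 _
        (by fun_prop) ?_
      intro r v s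
      simp only [Prod.ext_iff]
      exact ⟨by ring, trivial⟩
    have hflip2 : (twoJumpLaw ε νR).map (fun p : ℝ × ℝ => (p.1, -p.2)) = twoJumpLaw ε νR := by
      refine twoJumpLaw_flip ε νR (fun s => (s.1, -s.2)) (by fun_prop) signs_map_flip2 _
        (by fun_prop) ?_
      intro r v s
      simp only [Prod.ext_iff]
      exact ⟨trivial, by ring⟩
    -- the key pointwise bound for N ≥ 2
    have main : ∀ N : ℕ, 2 ≤ N →
        ENNReal.ofReal (Real.exp (-((N:ℝ) ^ ((1:ℝ)/2)) + -((N:ℝ) ^ ((1:ℝ)/2))) / 256)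
          ≤ μ {ω | (N:ℝ) * 1 ≤ (∑ i ∈ Finset.range N, X i ω).1 ∧
              (N:ℝ) * 1 ≤ (∑ i ∈ Finset.range N, X i ω).2} := by
      intro N hN
      have hNR : (0:ℝ) ≤ (N:ℝ) := Nat.cast_nonneg N
      set A : Set (ℝ × ℝ) := {p | (N:ℝ) ≤ p.1 ∧ 0 ≤ p.2} with hAdef
      set B : Set (ℝ × ℝ) := {p | 0 ≤ p.1 ∧ (N:ℝ) ≤ p.2} with hBdef
      set C : Set (ℝ × ℝ) := {p | 0 ≤ p.1 ∧ 0 ≤ p.2} with hCdef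
      have hA : MeasurableSet A :=
        (measurableSet_le measurable_const measurable_fst).inter
          (measurableSet_le measurable_const measurable_snd)
      have hB : MeasurableSet B :=
        (measurableSet_le measurable_const measurable_fst).inter
          (measurableSet_le measurable_const measurable_snd)
      have hC : MeasurableSet C :=
        (measurableSet_le measurable_const measurable_fst).inter
          (measurableSet_le measurable_const measurable_snd)
      have hT : Measurable (fun ω => ∑ i ∈ Finset.Ico 2 N, X i ω) :=
        Finset.measurable_sum _ (fun i _ => hmeas i)
      -- independence splitting
      have hpair := indepFun_pair_sum hindep hmeas N
      have h1 := hpair.measure_inter_preimage_eq_mul (A ×ˢ B) C (hA.prod hB) hC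
      have h01 := (hindep.indepFun (i := 0) (j := 1) (by norm_num)).measure_inter_preimage_eq_mul
          A B hA hB
      have hpre : ((fun ω => (X 0 ω, X 1 ω)) ⁻¹' (A ×ˢ B)) = (X 0 ⁻¹' A) ∩ (X 1 ⁻¹' B) :=
        Set.mk_preimage_prod (X 0) (X 1)
      -- lower bounds for each factor
      have hq0 : νR (Set.Ici ((N:ℝ))) * (1 / 8 : ENNReal) ≤ μ (X 0 ⁻¹' A) := by
        rw [← Measure.map_apply (hmeas 0) hA, hident 0]
        exact jump_bound1 ε ⟨hε0, hε1⟩ νR _ hNR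
      have hq1 : νR (Set.Ici ((N:ℝ))) * (1 / 8 : ENNReal) ≤ μ (X 1 ⁻¹' B) := by
        rw [← Measure.map_apply (hmeas 1) hB, hident 1]
        exact jump_bound2 ε ⟨hε0, hε1⟩ νR _ hNR
      have hqF : (1 : ENNReal) / 4 ≤ μ ((fun ω => ∑ i ∈ Finset.Ico 2 N, X i ω) ⁻¹' C) :=
        quadrant_bound hindep hmeas hident hflip1 hflip2 (Finset.Ico 2 N)
      -- the intersection is contained in the target event
      have hsplit : ∀ ω : Ω, (∑ i ∈ Finset.range N, X i ω)
          = X 0 ω + X 1 ω + ∑ i ∈ Finset.Ico 2 N, X i ω := by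
        intro ω
        rw [Finset.range_eq_Ico, ← Finset.sum_Ico_consecutive _ (Nat.zero_le 2) hN]
        congr 1
        rw [show Finset.Ico 0 2 = ({0, 1} : Finset ℕ) by decide, Finset.sum_pair (by norm_num)]
      have hsub : ((fun ω => (X 0 ω, X 1 ω)) ⁻¹' (A ×ˢ B)) ∩
          ((fun ω => ∑ i ∈ Finset.Ico 2 N, X i ω) ⁻¹' C)
          ⊆ {ω | (N:ℝ) * 1 ≤ (∑ i ∈ Finset.range N, X i ω).1 ∧
              (N:ℝ) * 1 ≤ (∑ i ∈ Finset.range N, X i ω).2} := by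
        rintro ω ⟨hab, hc⟩
        rw [hpre] at hab
        obtain ⟨⟨ha1, ha2⟩, hb1, hb2⟩ := hab
        obtain ⟨hc1, hc2⟩ := hc
        have e := hsplit ω
        constructor
        · have : (∑ i ∈ Finset.range N, X i ω).1
              = (X 0 ω).1 + (X 1 ω).1 + (∑ i ∈ Finset.Ico 2 N, X i ω).1 := by
            rw [e]; rfl
          rw [this]
          have := hc1
          simp only [mul_one]
          linarith
        · have : (∑ i ∈ Finset.range N, X i ω).2
              = (X 0 ω).2 + (X 1 ω).2 + (∑ i ∈ Finset.Ico 2 N, X i ω).2 := by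
            rw [e]; rfl
          rw [this]
          simp only [mul_one]
          linarith
      -- put everything together in ENNReal
      have hchain : (νR (Set.Ici ((N:ℝ))) * (1 / 8 : ENNReal))
            * (νR (Set.Ici ((N:ℝ))) * (1 / 8 : ENNReal)) * ((1:ENNReal) / 4)
          ≤ μ {ω | (N:ℝ) * 1 ≤ (∑ i ∈ Finset.range N, X i ω).1 ∧
              (N:ℝ) * 1 ≤ (∑ i ∈ Finset.range N, X i ω).2} := by
        calc (νR (Set.Ici ((N:ℝ))) * (1 / 8 : ENNReal))
              * (νR (Set.Ici ((N:ℝ))) * (1 / 8 : ENNReal)) * ((1:ENNReal) / 4)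
            ≤ (μ (X 0 ⁻¹' A) * μ (X 1 ⁻¹' B))
              * μ ((fun ω => ∑ i ∈ Finset.Ico 2 N, X i ω) ⁻¹' C) :=
              mul_le_mul' (mul_le_mul' hq0 hq1) hqF
          _ = μ (((fun ω => (X 0 ω, X 1 ω)) ⁻¹' (A ×ˢ B)) ∩
              ((fun ω => ∑ i ∈ Finset.Ico 2 N, X i ω) ⁻¹' C)) := by
              rw [h1, hpre, h01]
          _ ≤ _ := measure_mono hsub
      refine le_trans (le_of_eq ?_) hchain
      rw [hνR ((N:ℝ)) hNR]
      have hepos : (0:ℝ) < Real.exp (-((N:ℝ) ^ ((1:ℝ)/2))) := Real.exp_pos _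
      have hval : Real.exp (-((N:ℝ) ^ ((1:ℝ)/2)) + -((N:ℝ) ^ ((1:ℝ)/2))) / 256
          = (Real.exp (-((N:ℝ) ^ ((1:ℝ)/2))) * (1/8))
            * (Real.exp (-((N:ℝ) ^ ((1:ℝ)/2))) * (1/8)) * (1/4) := by
        rw [Real.exp_add]; ring
      rw [hval, ENNReal.ofReal_mul (by positivity), ENNReal.ofReal_mul (by positivity),
        ENNReal.ofReal_mul (by positivity)]
      have h8 : ENNReal.ofReal (1/8 : ℝ) = (1/8 : ENNReal) := by
        rw [ENNReal.ofReal_div_of_pos (by norm_num)]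
        norm_num
      have h4 : ENNReal.ofReal (1/4 : ℝ) = (1/4 : ENNReal) := by
        rw [ENNReal.ofReal_div_of_pos (by norm_num)]
        norm_num
      rw [h8, h4]
    -- pass from the pointwise bound to the liminf
    have hev : ∀ᶠ N : ℕ in atTop,
        (-2 : ℝ) - Real.log 256 / (N:ℝ) ^ ((1:ℝ)/2)
          ≤ Real.log (μ {ω | (N:ℝ) * 1 ≤ (∑ i ∈ Finset.range N, X i ω).1 ∧
              (N:ℝ) * 1 ≤ (∑ i ∈ Finset.range N, X i ω).2}).toReal
            / (N:ℝ) ^ ((1:ℝ)/2) := by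
      filter_upwards [eventually_ge_atTop 2] with N hN
      have hNpos : (0:ℝ) < (N:ℝ) := by
        have : (2:ℝ) ≤ (N:ℝ) := by exact_mod_cast hN
        linarith
      set s : ℝ := (N:ℝ) ^ ((1:ℝ)/2) with hsdef
      have hs : 0 < s := Real.rpow_pos_of_pos hNpos _
      have hmain := main N hN
      have hne : μ {ω | (N:ℝ) * 1 ≤ (∑ i ∈ Finset.range N, X i ω).1 ∧
          (N:ℝ) * 1 ≤ (∑ i ∈ Finset.range N, X i ω).2} ≠ ⊤ := measure_ne_top _ _
      have htr : Real.exp (-s + -s) / 256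
          ≤ (μ {ω | (N:ℝ) * 1 ≤ (∑ i ∈ Finset.range N, X i ω).1 ∧
              (N:ℝ) * 1 ≤ (∑ i ∈ Finset.range N, X i ω).2}).toReal := by
        have := ENNReal.toReal_mono hne hmain
        rwa [ENNReal.toReal_ofReal (by positivity)] at this
      have hlog : (-s + -s) - Real.log 256
          ≤ Real.log (μ {ω | (N:ℝ) * 1 ≤ (∑ i ∈ Finset.range N, X i ω).1 ∧
              (N:ℝ) * 1 ≤ (∑ i ∈ Finset.range N, X i ω).2}).toReal := by
        have h := Real.log_le_log (by positivity) htr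
        rwa [Real.log_div (Real.exp_ne_zero _) (by norm_num), Real.log_exp] at h
      have hdiv : ((-s + -s) - Real.log 256) / s
          ≤ Real.log (μ {ω | (N:ℝ) * 1 ≤ (∑ i ∈ Finset.range N, X i ω).1 ∧
              (N:ℝ) * 1 ≤ (∑ i ∈ Finset.range N, X i ω).2}).toReal / s := by
        gcongr
      have heq : ((-s + -s) - Real.log 256) / s = -2 - Real.log 256 / s := by
        field_simp
        ring
      rw [← heq]
      exact hdiv
    have htends : Tendsto (fun N : ℕ => (-2 : ℝ) - Real.log 256 / (N:ℝ) ^ ((1:ℝ)/2))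
        atTop (nhds (-2 : ℝ)) := by
      have hinf : Tendsto (fun N : ℕ => (N:ℝ) ^ ((1:ℝ)/2)) atTop atTop :=
        (tendsto_rpow_atTop (by norm_num)).comp tendsto_natCast_atTop_atTop
      have h0 : Tendsto (fun N : ℕ => Real.log 256 / (N:ℝ) ^ ((1:ℝ)/2)) atTop (nhds (0 : ℝ)) :=
        Tendsto.div_atTop tendsto_const_nhds hinf
      simpa using tendsto_const_nhds.sub h0
    have hlim : liminf (fun N : ℕ => (-2 : ℝ) - Real.log 256 / (N:ℝ) ^ ((1:ℝ)/2)) atTop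
        = (-2 : ℝ) := htends.liminf_eq
    rw [← hlim]
    refine liminf_le_liminf hev htends.isBoundedUnder_ge ?_
    refine isCoboundedUnder_ge_of_eventually_le atTop (x := 0) ?_
    filter_upwards [eventually_ge_atTop 1] with N hN
    have hNpos : (0:ℝ) < (N:ℝ) := by
      have : (1:ℝ) ≤ (N:ℝ) := by exact_mod_cast hN
      linarith
    have hs : 0 < (N:ℝ) ^ ((1:ℝ)/2) := Real.rpow_pos_of_pos hNpos _
    apply div_nonpos_of_nonpos_of_nonneg _ hs.le
    apply Real.log_nonpos ENNReal.toReal_nonneg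
    have : μ {ω | (N:ℝ) * 1 ≤ (∑ i ∈ Finset.range N, X i ω).1 ∧
        (N:ℝ) * 1 ≤ (∑ i ∈ Finset.range N, X i ω).2} ≤ 1 := prob_le_one
    calc (μ _).toReal ≤ (1 : ENNReal).toReal := ENNReal.toReal_mono (by norm_num) this
      _ = 1 := by norm_num
  · -- the numeric comparison
    intro h4
    have hsq : Real.sqrt ε < 1/2 := by
      have h14 : Real.sqrt (1/4 : ℝ) = 1/2 := by
        rw [show (1/4:ℝ) = (1/2)^2 by norm_num, Real.sqrt_sq (by norm_num)]
      calc Real.sqrt ε < Real.sqrt (1/4) := Real.sqrt_lt_sqrt hε0.le h4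
        _ = 1/2 := h14
    have hs : 0 < Real.sqrt ε := Real.sqrt_pos.mpr hε0
    have hrw : ε ^ (-(1:ℝ)/2) = (Real.sqrt ε)⁻¹ := by
      rw [show (-(1:ℝ)/2) = -(1/2 : ℝ) by norm_num, Real.rpow_neg hε0.le,
        ← Real.sqrt_eq_rpow]
    rw [hrw]
    have h2 : (2:ℝ) < (Real.sqrt ε)⁻¹ := by
      have hmul : (Real.sqrt ε)⁻¹ * Real.sqrt ε = 1 := inv_mul_cancel₀ hs.ne'
      nlinarith [inv_pos.mpr hs]
    linarith
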